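/- arXiv:2203.04054 — 2 statements merged into one kernel-verified Lean document; each statement's English description precedes it below -/
import Mathlib

section
/- Let X be a complete separable metric space and p ≥ 1. For points x ≠ y in X, a probability measure η on X, and α ∈ [0,1], the measure α δ_x + (1−α) δ_y minimizes the p-Wasserstein distance from η among all measures of the form a δ_x + (1−a) δ_y with a ∈ [0,1] if and only if η({z : r(x,z) < r(y,z)}) ≤ α ≤ η({z : r(x,z) ≤ r(y,z)}). -/
open MeasureTheory Filter

/-- The `p`-Wasserstein distance with cost function `c` (the distance of the
underlying space): infimum over couplings of `∫ c(x,y)^p dπ`, to the power `1/p`. -/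
noncomputable def wassersteinDist {X : Type*} [MeasurableSpace X]
    (c : X → X → ℝ) (p : ℝ) (μ ν : Measure X) : ℝ :=
  sInf {r : ℝ | ∃ π : Measure (X × X), IsProbabilityMeasure π ∧
      π.map Prod.fst = μ ∧ π.map Prod.snd = ν ∧
      r = ∫ q, c q.1 q.2 ^ p ∂π} ^ (1 / p)

/-- The measure `a δ_x + (1-a) δ_y`. -/
noncomputable def twoPointMeasure {X : Type*} [MeasurableSpace X] (x y : X) (a : ℝ) :
    Measure X :=
  ENNReal.ofReal a • Measure.dirac x + ENNReal.ofReal (1 - a) • Measure.dirac y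

section Aux

open Set

set_option linter.unusedSectionVars false

variable {X : Type*} [MetricSpace X] [SecondCountableTopology X]
  [MeasurableSpace X] [BorelSpace X]
  {p : ℝ} {x y : X} {η : Measure X} {a : ℝ} {π : Measure (X × X)}

/-- The cost set appearing in the definition of `wassersteinDist dist`. -/
def WTP.cSet (p : ℝ) (η : Measure X) (x y : X) (a : ℝ) : Set ℝ :=
  {r : ℝ | ∃ π : Measure (X × X), IsProbabilityMeasure π ∧
      π.map Prod.fst = η ∧ π.map Prod.snd = twoPointMeasure x y a ∧
      r = ∫ q, dist q.1 q.2 ^ p ∂π}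

lemma WTP.wassersteinDist_eq (p : ℝ) (η : Measure X) (x y : X) (a : ℝ) :
    wassersteinDist dist p η (twoPointMeasure x y a) = sInf (WTP.cSet p η x y a) ^ (1 / p) :=
  rfl

namespace WTP

lemma twoPoint_isProb (x y : X) (ha : a ∈ Icc (0:ℝ) 1) :
    IsProbabilityMeasure (twoPointMeasure x y a) := by
  constructor
  simp only [twoPointMeasure, Measure.add_apply, Measure.smul_apply, smul_eq_mul,
    measure_univ, mul_one]
  rw [← ENNReal.ofReal_add ha.1 (by linarith [ha.2])]
  norm_num

lemma twoPoint_comm (x y : X) (a : ℝ) :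
    twoPointMeasure x y a = twoPointMeasure y x (1 - a) := by
  simp only [twoPointMeasure, sub_sub_cancel]
  exact add_comm _ _

lemma twoPoint_singleton (hxy : x ≠ y) (a : ℝ) :
    twoPointMeasure x y a {x} = ENNReal.ofReal a := by
  simp only [twoPointMeasure, Measure.add_apply, Measure.smul_apply, smul_eq_mul,
    Measure.dirac_apply' _ (measurableSet_singleton x)]
  rw [Set.indicator_of_mem (by simp) 1, Set.indicator_of_notMem (by simp [Ne.symm hxy]) 1]
  simp

lemma twoPoint_pair_compl (x y : X) (a : ℝ) :
    twoPointMeasure x y a ({x, y} : Set X)ᶜ = 0 := by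
  have hm : MeasurableSet (({x, y} : Set X)ᶜ) :=
    (((measurableSet_singleton x).union (measurableSet_singleton y)).compl)
  simp only [twoPointMeasure, Measure.add_apply, Measure.smul_apply, smul_eq_mul,
    Measure.dirac_apply' _ hm]
  rw [Set.indicator_of_notMem (by simp) 1, Set.indicator_of_notMem (by simp) 1]
  simp

lemma cont_pow (hp : 1 ≤ p) (x : X) : Continuous fun z : X => dist x z ^ p :=
  (continuous_const.dist continuous_id).rpow_const (fun _ => Or.inr (by linarith))

lemma integrable_pow (hp : 1 ≤ p) (hη : IsFiniteMeasure η)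
    (hmom : ∀ x0 : X, HasFiniteIntegral (fun z => dist z x0 ^ p) η) (x0 : X) :
    Integrable (fun z => dist x0 z ^ p) η := by
  refine ⟨((cont_pow hp x0).aestronglyMeasurable), ?_⟩
  simpa [dist_comm] using hmom x0

/-- The pointwise minimal cost. -/
noncomputable def minCost (p : ℝ) (x y : X) (z : X) : ℝ :=
  min (dist x z ^ p) (dist y z ^ p)

lemma integrable_minCost (hp : 1 ≤ p) (hη : IsFiniteMeasure η)
    (hmom : ∀ x0 : X, HasFiniteIntegral (fun z => dist z x0 ^ p) η) :
    Integrable (fun z => minCost p x y z) η := by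
  refine Integrable.mono' (integrable_pow hp hη hmom x)
    (((cont_pow hp x).min (cont_pow hp y)).aestronglyMeasurable) ?_
  filter_upwards with z
  have h1 : (0:ℝ) ≤ dist x z ^ p := Real.rpow_nonneg dist_nonneg p
  have h2 : (0:ℝ) ≤ dist y z ^ p := Real.rpow_nonneg dist_nonneg p
  simp only [minCost]
  rw [Real.norm_of_nonneg (le_min h1 h2)]
  exact min_le_left _ _

section Coupling

variable (hp : 1 ≤ p) (hxy : x ≠ y)
  (hπ : IsProbabilityMeasure π) (h1 : π.map Prod.fst = η)
  (h2 : π.map Prod.snd = twoPointMeasure x y a)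

include h2 in
lemma coupling_ae : ∀ᵐ q ∂π, q.2 = x ∨ q.2 = y := by
  have hm : MeasurableSet (({x, y} : Set X)ᶜ) :=
    (((measurableSet_singleton x).union (measurableSet_singleton y)).compl)
  have : π (Prod.snd ⁻¹' ({x, y} : Set X)ᶜ) = 0 := by
    rw [← Measure.map_apply measurable_snd hm, h2, twoPoint_pair_compl]
  rw [ae_iff]
  refine measure_mono_null (fun q hq => ?_) this
  simpa using hq

include hxy h2 in
lemma coupling_snd_x : π (Prod.snd ⁻¹' {x}) = ENNReal.ofReal a := by
  rw [← Measure.map_apply measurable_snd (measurableSet_singleton x), h2,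
    twoPoint_singleton hxy]

include hp h1 in
lemma coupling_integrable_fst_pow (hη : IsFiniteMeasure η)
    (hmom : ∀ x0 : X, HasFiniteIntegral (fun z => dist z x0 ^ p) η) (x0 : X) :
    Integrable (fun q : X × X => dist x0 q.1 ^ p) π := by
  have h := integrable_pow (η := η) hp hη hmom x0
  rw [← h1] at h
  exact h.comp_measurable measurable_fst

include hp h1 h2 in
lemma coupling_integrable_cost (hη : IsFiniteMeasure η)
    (hmom : ∀ x0 : X, HasFiniteIntegral (fun z => dist z x0 ^ p) η) :
    Integrable (fun q : X × X => dist q.1 q.2 ^ p) π := by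
  have hxI := coupling_integrable_fst_pow hp h1 hη hmom x
  have hyI := coupling_integrable_fst_pow hp h1 hη hmom y
  refine Integrable.mono' (hxI.add hyI) ?_ ?_
  · exact ((continuous_fst.dist continuous_snd).rpow_const
      (fun _ => Or.inr (by linarith))).aestronglyMeasurable
  · filter_upwards [coupling_ae h2] with q hq
    have h0 : (0:ℝ) ≤ dist q.1 q.2 ^ p := Real.rpow_nonneg dist_nonneg p
    simp only [Pi.add_apply]
    rw [Real.norm_of_nonneg h0]
    rcases hq with h | h <;> rw [h]
    · have : dist q.1 x ^ p = dist x q.1 ^ p := by rw [dist_comm]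
      rw [this]
      have := Real.rpow_nonneg (dist_nonneg (x := y) (y := q.1)) p
      linarith
    · have : dist q.1 y ^ p = dist y q.1 ^ p := by rw [dist_comm]
      rw [this]
      have := Real.rpow_nonneg (dist_nonneg (x := x) (y := q.1)) p
      linarith

include hp h1 h2 in
lemma coupling_cost_ae_ge :
    ∀ᵐ q ∂π, minCost p x y q.1 ≤ dist q.1 q.2 ^ p := by
  filter_upwards [coupling_ae h2] with q hq
  rcases hq with h | h <;> rw [h] <;>
    show min (dist x q.1 ^ p) (dist y q.1 ^ p) ≤ _
  · rw [dist_comm q.1 x]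
    exact min_le_left _ _
  · rw [dist_comm q.1 y]
    exact min_le_right _ _

include hp h1 h2 in
lemma coupling_cost_ge (hη : IsFiniteMeasure η)
    (hmom : ∀ x0 : X, HasFiniteIntegral (fun z => dist z x0 ^ p) η) :
    ∫ z, minCost p x y z ∂η ≤ ∫ q, dist q.1 q.2 ^ p ∂π := by
  have hmin' := integrable_minCost (x := x) (y := y) hp hη hmom
  have hmin : Integrable (fun q : X × X => minCost p x y q.1) π := by
    have h := hmin'
    rw [← h1] at h
    exact h.comp_measurable measurable_fst
  have hL : ∫ z, minCost p x y z ∂η = ∫ q, minCost p x y q.1 ∂π := by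
    rw [← h1, integral_map measurable_fst.aemeasurable (by rw [h1]; exact hmin'.1)]
  rw [hL]
  exact integral_mono_ae hmin (coupling_integrable_cost hp h1 h2 hη hmom)
    (coupling_cost_ae_ge hp h1 h2)

include h2 in
lemma coupling_snd_compl : π (Prod.snd ⁻¹' (({x, y} : Set X)ᶜ)) = 0 := by
  have hm : MeasurableSet (({x, y} : Set X)ᶜ) :=
    (((measurableSet_singleton x).union (measurableSet_singleton y)).compl)
  rw [← Measure.map_apply measurable_snd hm, h2, twoPoint_pair_compl]

include hp h1 in
lemma coupling_integrable_minCost_fst (hη : IsFiniteMeasure η)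
    (hmom : ∀ x0 : X, HasFiniteIntegral (fun z => dist z x0 ^ p) η) :
    Integrable (fun q : X × X => minCost p x y q.1) π := by
  have h := integrable_minCost (x := x) (y := y) hp hη hmom
  rw [← h1] at h
  exact h.comp_measurable measurable_fst

include hp h1 in
lemma coupling_integral_minCost_fst (hη : IsFiniteMeasure η)
    (hmom : ∀ x0 : X, HasFiniteIntegral (fun z => dist z x0 ^ p) η) :
    ∫ q, minCost p x y q.1 ∂π = ∫ z, minCost p x y z ∂η := by
  have hmin' := integrable_minCost (x := x) (y := y) hp hη hmom
  rw [← h1, integral_map measurable_fst.aemeasurable (by rw [h1]; exact hmin'.1)]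

end Coupling


section Main

variable (hp : 1 ≤ p) (hxy : x ≠ y) (hη : IsProbabilityMeasure η)
  (hmom : ∀ x0 : X, HasFiniteIntegral (fun z => dist z x0 ^ p) η)

lemma measurableSet_ltSet (x y : X) :
    MeasurableSet {z : X | dist x z < dist y z} :=
  measurableSet_lt (continuous_const.dist continuous_id).measurable
    (continuous_const.dist continuous_id).measurable

lemma measurableSet_leSet (x y : X) :
    MeasurableSet {z : X | dist x z ≤ dist y z} :=
  measurableSet_le (continuous_const.dist continuous_id).measurable
    (continuous_const.dist continuous_id).measurable

include hp hxy hη hmom in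
/-- Existence of an optimal coupling when `α` is between the two critical masses. -/
lemma exists_opt_coupling {α : ℝ} (hα : α ∈ Icc (0:ℝ) 1)
    (hm : (η {z | dist x z < dist y z}).toReal ≤ α)
    (hM : α ≤ (η {z | dist x z ≤ dist y z}).toReal) :
    (∫ z, minCost p x y z ∂η) ∈ cSet p η x y α := by
  haveI := hη
  have hp0 : (0:ℝ) < p := by linarith
  set A := {z : X | dist x z < dist y z} with hAdef
  set Ab := {z : X | dist x z ≤ dist y z} with hAbdef
  have hAm : MeasurableSet A := measurableSet_ltSet x y
  have hAbm : MeasurableSet Ab := measurableSet_leSet x y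
  set T := Ab \ A with hTdef
  have hTm : MeasurableSet T := hAbm.diff hAm
  have hAsub : A ⊆ Ab := by
    rw [hAdef, hAbdef]
    intro z hz
    have hz' : dist x z < dist y z := hz
    show dist x z ≤ dist y z
    exact le_of_lt hz'
  set m := (η A).toReal with hmdef
  set M := (η Ab).toReal with hMdef
  have hηA : η A = ENNReal.ofReal m := (ENNReal.ofReal_toReal (measure_ne_top η A)).symm
  have hηAb : η Ab = ENNReal.ofReal M := (ENNReal.ofReal_toReal (measure_ne_top η Ab)).symm
  have hmM : m ≤ M := ENNReal.toReal_mono (measure_ne_top η Ab) (measure_mono hAsub)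
  have hm0 : 0 ≤ m := ENNReal.toReal_nonneg
  have hηT : η T = ENNReal.ofReal (M - m) := by
    rw [hTdef, measure_diff hAsub hAm.nullMeasurableSet (measure_ne_top η A), hηA, hηAb,
      ENNReal.ofReal_sub _ hm0]
  -- choose the splitting fraction on the tie set
  set θ := if M = m then 0 else (α - m)/(M - m) with hθdef
  have hθ0 : 0 ≤ θ := by
    rw [hθdef]; split_ifs with h
    · exact le_rfl
    · have hlt : m < M := lt_of_le_of_ne hmM (fun e => h e.symm)
      exact div_nonneg (by linarith) (by linarith)
  have hθ1 : θ ≤ 1 := by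
    rw [hθdef]; split_ifs with h
    · exact zero_le_one
    · have hlt : m < M := lt_of_le_of_ne hmM (fun e => h e.symm)
      rw [div_le_one (by linarith)]; linarith
  have hθeq : m + θ * (M - m) = α := by
    rw [hθdef]; split_ifs with h
    · rw [h] at hM
      simp only [zero_mul, add_zero]; linarith
    · have hlt : m < M := lt_of_le_of_ne hmM (fun e => h e.symm)
      rw [div_mul_cancel₀ _ (by linarith : M - m ≠ 0)]; ring
  -- the two pieces of the coupling
  set ηx := η.restrict A + ENNReal.ofReal θ • η.restrict T with hηxdef
  set ηy := η.restrict Abᶜ + ENNReal.ofReal (1-θ) • η.restrict T with hηydef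
  have hsum : ηx + ηy = η := by
    have h1 : ENNReal.ofReal θ • η.restrict T + ENNReal.ofReal (1-θ) • η.restrict T
        = η.restrict T := by
      rw [← add_smul, ← ENNReal.ofReal_add hθ0 (by linarith)]
      norm_num
    have h2 : η.restrict A + η.restrict T = η.restrict Ab := by
      rw [← Measure.restrict_union disjoint_sdiff_right hTm, Set.union_diff_cancel hAsub]
    have h3 := Measure.restrict_add_restrict_compl (μ := η) hAbm
    rw [hηxdef, hηydef]
    conv_rhs => rw [← h3, ← h2, ← h1]
    abel
  have hxu : ηx Set.univ = ENNReal.ofReal α := by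
    rw [hηxdef]
    simp only [Measure.add_apply, Measure.smul_apply, smul_eq_mul,
      Measure.restrict_apply_univ]
    rw [hηA, hηT, ← ENNReal.ofReal_mul hθ0,
      ← ENNReal.ofReal_add hm0 (mul_nonneg hθ0 (by linarith)), hθeq]
  have hyu : ηy Set.univ = ENNReal.ofReal (1 - α) := by
    have htot : ηx Set.univ + ηy Set.univ = 1 := by
      rw [← Measure.add_apply, hsum, measure_univ]
    rw [hxu] at htot
    have hre : ENNReal.ofReal (1 - α) = 1 - ENNReal.ofReal α := by
      rw [ENNReal.ofReal_sub _ hα.1, ENNReal.ofReal_one]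
    rw [hre]
    exact ENNReal.eq_sub_of_add_eq ENNReal.ofReal_ne_top (by rw [add_comm]; exact htot)
  have hfx : Measurable (fun z : X => (z, x)) := measurable_id.prodMk measurable_const
  have hfy : Measurable (fun z : X => (z, y)) := measurable_id.prodMk measurable_const
  set π := ηx.map (fun z => (z, x)) + ηy.map (fun z => (z, y)) with hπdef
  have hfst : π.map Prod.fst = η := by
    rw [hπdef, Measure.map_add _ _ measurable_fst, Measure.map_map measurable_fst hfx,
      Measure.map_map measurable_fst hfy]
    have e1 : Prod.fst ∘ (fun z : X => (z, x)) = id := rfl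
    have e2 : Prod.fst ∘ (fun z : X => (z, y)) = id := rfl
    rw [e1, e2, Measure.map_id, Measure.map_id, hsum]
  have hsnd : π.map Prod.snd = twoPointMeasure x y α := by
    rw [hπdef, Measure.map_add _ _ measurable_snd, Measure.map_map measurable_snd hfx,
      Measure.map_map measurable_snd hfy]
    have e1 : Prod.snd ∘ (fun z : X => (z, x)) = fun _ => x := rfl
    have e2 : Prod.snd ∘ (fun z : X => (z, y)) = fun _ => y := rfl
    rw [e1, e2, Measure.map_const, Measure.map_const, hxu, hyu]
    rfl
  have hprob : IsProbabilityMeasure π := by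
    constructor
    rw [hπdef, Measure.add_apply, Measure.map_apply hfx MeasurableSet.univ,
      Measure.map_apply hfy MeasurableSet.univ, Set.preimage_univ, Set.preimage_univ,
      hxu, hyu, ← ENNReal.ofReal_add hα.1 (by linarith [hα.2])]
    norm_num
  refine ⟨π, hprob, hfst, hsnd, ?_⟩
  -- now compute the cost of this coupling
  have hηx_le : ηx ≤ η := by
    rw [← hsum]; exact Measure.le_add_right le_rfl
  have hηy_le : ηy ≤ η := by
    rw [← hsum, add_comm]; exact Measure.le_add_right le_rfl
  have hIx : Integrable (fun z => dist x z ^ p) η := integrable_pow hp inferInstance hmom x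
  have hIy : Integrable (fun z => dist y z ^ p) η := integrable_pow hp inferInstance hmom y
  have hIxx : Integrable (fun z => dist x z ^ p) ηx := hIx.mono_measure hηx_le
  have hIyy : Integrable (fun z => dist y z ^ p) ηy := hIy.mono_measure hηy_le
  have hflipx : (fun z : X => dist z x ^ p) = fun z => dist x z ^ p := by
    funext z; rw [dist_comm]
  have hflipy : (fun z : X => dist z y ^ p) = fun z => dist y z ^ p := by
    funext z; rw [dist_comm]
  have hcostm : ∀ μ : Measure (X × X),
      AEStronglyMeasurable (fun q : X × X => dist q.1 q.2 ^ p) μ := fun μ =>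
    ((continuous_fst.dist continuous_snd).rpow_const
      (fun _ => Or.inr (by linarith))).aestronglyMeasurable
  have hI1 : Integrable (fun q : X × X => dist q.1 q.2 ^ p) (ηx.map (fun z => (z, x))) := by
    rw [integrable_map_measure (hcostm _) hfx.aemeasurable]
    show Integrable (fun z : X => dist z x ^ p) ηx
    rw [hflipx]; exact hIxx
  have hI2 : Integrable (fun q : X × X => dist q.1 q.2 ^ p) (ηy.map (fun z => (z, y))) := by
    rw [integrable_map_measure (hcostm _) hfy.aemeasurable]
    show Integrable (fun z : X => dist z y ^ p) ηy
    rw [hflipy]; exact hIyy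
  have e1 : ∫ q, dist q.1 q.2 ^ p ∂(ηx.map (fun z => (z, x))) = ∫ z, dist x z ^ p ∂ηx := by
    rw [integral_map hfx.aemeasurable (hcostm _)]
    show ∫ z, dist z x ^ p ∂ηx = _
    rw [hflipx]
  have e2 : ∫ q, dist q.1 q.2 ^ p ∂(ηy.map (fun z => (z, y))) = ∫ z, dist y z ^ p ∂ηy := by
    rw [integral_map hfy.aemeasurable (hcostm _)]
    show ∫ z, dist z y ^ p ∂ηy = _
    rw [hflipy]
  have ex : ∫ z, dist x z ^ p ∂ηx
      = ∫ z in A, dist x z ^ p ∂η + θ * ∫ z in T, dist x z ^ p ∂η := by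
    rw [hηxdef, integral_add_measure hIx.integrableOn
      ((hIx.integrableOn (s := T)).smul_measure ENNReal.ofReal_ne_top),
      integral_smul_measure, ENNReal.toReal_ofReal hθ0, smul_eq_mul]
  have ey : ∫ z, dist y z ^ p ∂ηy
      = ∫ z in Abᶜ, dist y z ^ p ∂η + (1 - θ) * ∫ z in T, dist y z ^ p ∂η := by
    rw [hηydef, integral_add_measure hIy.integrableOn
      ((hIy.integrableOn (s := T)).smul_measure ENNReal.ofReal_ne_top),
      integral_smul_measure, ENNReal.toReal_ofReal (by linarith), smul_eq_mul]
  have hminI := integrable_minCost (x := x) (y := y) hp inferInstance hmom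
  have hLsplit : ∫ z, minCost p x y z ∂η
      = ∫ z in A, minCost p x y z ∂η + ∫ z in T, minCost p x y z ∂η
        + ∫ z in Abᶜ, minCost p x y z ∂η := by
    have h4 : ∫ z in Ab, minCost p x y z ∂η
        = ∫ z in A, minCost p x y z ∂η + ∫ z in T, minCost p x y z ∂η := by
      rw [← setIntegral_union disjoint_sdiff_right hTm hminI.integrableOn hminI.integrableOn,
        Set.union_diff_cancel hAsub]
    rw [← integral_add_compl hAbm hminI, h4]
  have hTeq : ∀ z ∈ T, dist x z = dist y z := fun z hz =>
    le_antisymm hz.1 (not_lt.1 hz.2)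
  have hgA : ∫ z in A, minCost p x y z ∂η = ∫ z in A, dist x z ^ p ∂η :=
    setIntegral_congr_fun hAm (fun z hz =>
      min_eq_left (le_of_lt (Real.rpow_lt_rpow dist_nonneg hz hp0)))
  have hgT : ∫ z in T, minCost p x y z ∂η = ∫ z in T, dist x z ^ p ∂η :=
    setIntegral_congr_fun hTm (fun z hz => by
      show min _ _ = _
      rw [hTeq z hz, min_self])
  have hgC : ∫ z in Abᶜ, minCost p x y z ∂η = ∫ z in Abᶜ, dist y z ^ p ∂η :=
    setIntegral_congr_fun hAbm.compl (fun z hz =>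
      min_eq_right (le_of_lt (Real.rpow_lt_rpow dist_nonneg (not_le.1 hz) hp0)))
  have hTxy : ∫ z in T, dist y z ^ p ∂η = ∫ z in T, dist x z ^ p ∂η :=
    setIntegral_congr_fun hTm (fun z hz => by rw [hTeq z hz])
  rw [hπdef, integral_add_measure hI1 hI2, e1, e2, ex, ey, hTxy, hLsplit, hgA, hgT, hgC]
  ring

include hp hxy hη hmom in
/-- Quantitative lower bound on the cost of any coupling. -/
lemma coupling_cost_ge_eps {α : ℝ} (hα : α ∈ Icc (0:ℝ) 1) {ε : ℝ} (hε : 0 < ε)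
    (hπ : IsProbabilityMeasure π) (h1 : π.map Prod.fst = η)
    (h2 : π.map Prod.snd = twoPointMeasure x y α) :
    ∫ z, minCost p x y z ∂η + ε * ((η {z | dist x z ^ p + ε ≤ dist y z ^ p}).toReal - α)
      ≤ ∫ q, dist q.1 q.2 ^ p ∂π := by
  haveI := hη; haveI := hπ
  set Aε := {z : X | dist x z ^ p + ε ≤ dist y z ^ p} with hAεdef
  have hAεm : MeasurableSet Aε :=
    measurableSet_le ((cont_pow hp x).add continuous_const).measurable
      (cont_pow hp y).measurable
  set S := Aε ×ˢ ({y} : Set X) with hSdef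
  have hSm : MeasurableSet S := hAεm.prod (measurableSet_singleton y)
  have hfstAε : π (Prod.fst ⁻¹' Aε) = η Aε := by
    conv_rhs => rw [← h1]
    rw [Measure.map_apply measurable_fst hAεm]
  have hcompl : π (Prod.snd ⁻¹' (({x, y} : Set X)ᶜ)) = 0 := coupling_snd_compl h2
  have hsndx : π (Prod.snd ⁻¹' {x}) = ENNReal.ofReal α := coupling_snd_x hxy h2
  have hsub : Prod.fst ⁻¹' Aε
      ⊆ S ∪ (Prod.snd ⁻¹' ({x} : Set X) ∪ Prod.snd ⁻¹' (({x, y} : Set X)ᶜ)) := by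
    rintro ⟨z, w⟩ hz
    by_cases hwy : w = y
    · exact Or.inl ⟨hz, hwy⟩
    by_cases hwx : w = x
    · exact Or.inr (Or.inl hwx)
    · exact Or.inr (Or.inr (by simp [hwx, hwy]))
  have hbound : η Aε ≤ π S + ENNReal.ofReal α := by
    calc η Aε = π (Prod.fst ⁻¹' Aε) := hfstAε.symm
      _ ≤ π (S ∪ (Prod.snd ⁻¹' ({x} : Set X) ∪ Prod.snd ⁻¹' (({x, y} : Set X)ᶜ))) :=
          measure_mono hsub
      _ ≤ π S + (π (Prod.snd ⁻¹' ({x} : Set X)) + π (Prod.snd ⁻¹' (({x, y} : Set X)ᶜ))) :=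
          (measure_union_le _ _).trans (add_le_add le_rfl (measure_union_le _ _))
      _ = π S + ENNReal.ofReal α := by rw [hsndx, hcompl, add_zero]
  have hπS : (η Aε).toReal - α ≤ (π S).toReal := by
    rcases le_or_gt ((η Aε).toReal) α with hcase | hcase
    · have h0 := ENNReal.toReal_nonneg (a := π S); linarith
    · rw [← ENNReal.ofReal_le_iff_le_toReal (measure_ne_top π S),
        ENNReal.ofReal_sub _ hα.1, ENNReal.ofReal_toReal (measure_ne_top η Aε)]
      exact tsub_le_iff_right.2 hbound
  have hcost := coupling_integrable_cost hp h1 h2 inferInstance hmom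
  have hminf : Integrable (fun q : X × X => minCost p x y q.1) π :=
    coupling_integrable_minCost_fst hp h1 inferInstance hmom
  have hkey : ε * (π S).toReal ≤ ∫ q in S, (dist q.1 q.2 ^ p - minCost p x y q.1) ∂π := by
    refine setIntegral_ge_of_const_le_real hSm (measure_ne_top π S) ?_
      ((hcost.sub hminf).integrableOn)
    rintro ⟨z, w⟩ ⟨hz, hw⟩
    have hwy : w = y := hw
    have hz' : dist x z ^ p + ε ≤ dist y z ^ p := hz
    have hmin : minCost p x y z = dist x z ^ p :=
      min_eq_left (by linarith)
    show ε ≤ dist z w ^ p - minCost p x y z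
    rw [hwy, hmin, dist_comm z y]
    linarith
  have hnonneg : (0 : X × X → ℝ) ≤ᵐ[π]
      fun q => dist q.1 q.2 ^ p - minCost p x y q.1 := by
    filter_upwards [coupling_cost_ae_ge hp h1 h2] with q hq
    simp only [Pi.zero_apply]
    linarith
  have hle : ∫ q in S, (dist q.1 q.2 ^ p - minCost p x y q.1) ∂π
      ≤ ∫ q, (dist q.1 q.2 ^ p - minCost p x y q.1) ∂π :=
    setIntegral_le_integral (hcost.sub hminf) hnonneg
  have hsplit : ∫ q, (dist q.1 q.2 ^ p - minCost p x y q.1) ∂π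
      = ∫ q, dist q.1 q.2 ^ p ∂π - ∫ z, minCost p x y z ∂η := by
    rw [integral_sub hcost hminf,
      coupling_integral_minCost_fst hp h1 inferInstance hmom]
  have hfin : ε * ((η Aε).toReal - α) ≤ ε * (π S).toReal :=
    mul_le_mul_of_nonneg_left hπS (le_of_lt hε)
  rw [hsplit] at hle
  linarith

include hp hxy hη hmom in
lemma cSet_nonempty {α : ℝ} (hα : α ∈ Icc (0:ℝ) 1) : (cSet p η x y α).Nonempty := by
  haveI := hη
  haveI := twoPoint_isProb x y hα
  exact ⟨_, η.prod (twoPointMeasure x y α), inferInstance,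
    Measure.fst_prod, Measure.snd_prod, rfl⟩

include hp hxy hη hmom in
lemma cSet_lb {α : ℝ} (hα : α ∈ Icc (0:ℝ) 1) :
    ∀ r ∈ cSet p η x y α, ∫ z, minCost p x y z ∂η ≤ r := by
  haveI := hη
  rintro r ⟨π, hπ, h1, h2, rfl⟩
  exact coupling_cost_ge hp h1 h2 inferInstance hmom

include hp hxy hη hmom in
lemma le_sInf_cSet {α : ℝ} (hα : α ∈ Icc (0:ℝ) 1) :
    ∫ z, minCost p x y z ∂η ≤ sInf (cSet p η x y α) :=
  le_csInf (cSet_nonempty hp hxy hη hmom hα) (cSet_lb hp hxy hη hmom hα)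

include hp hxy hη hmom in
lemma sInf_cSet_eq_of_mem {α : ℝ} (hα : α ∈ Icc (0:ℝ) 1)
    (hm : (η {z | dist x z < dist y z}).toReal ≤ α)
    (hM : α ≤ (η {z | dist x z ≤ dist y z}).toReal) :
    sInf (cSet p η x y α) = ∫ z, minCost p x y z ∂η :=
  le_antisymm
    (csInf_le ⟨_, cSet_lb hp hxy hη hmom hα⟩
      (exists_opt_coupling hp hxy hη hmom hα hm hM))
    (le_sInf_cSet hp hxy hη hmom hα)

include hp hxy hη hmom in
lemma lt_sInf_cSet_of_lt {α : ℝ} (hα : α ∈ Icc (0:ℝ) 1)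
    (h : α < (η {z | dist x z < dist y z}).toReal) :
    ∫ z, minCost p x y z ∂η < sInf (cSet p η x y α) := by
  haveI := hη
  set An : ℕ → Set X := fun n => {z | dist x z ^ p + 1/((n : ℝ)+1) ≤ dist y z ^ p} with hAndef
  have hU : {z : X | dist x z < dist y z} = ⋃ n, An n := by
    ext z
    simp only [Set.mem_iUnion, hAndef, Set.mem_setOf_eq]
    constructor
    · intro hzlt
      have hlt : dist x z ^ p < dist y z ^ p :=
        Real.rpow_lt_rpow dist_nonneg hzlt (by linarith)
      obtain ⟨n, hn⟩ := exists_nat_one_div_lt (sub_pos.2 hlt)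
      exact ⟨n, by linarith⟩
    · rintro ⟨n, hn⟩
      have h0 : (0:ℝ) < 1/((n : ℝ)+1) := by positivity
      have hlt' : dist x z ^ p < dist y z ^ p := by linarith
      exact (Real.rpow_lt_rpow_iff dist_nonneg dist_nonneg (by linarith)).1 hlt'
  have hmono : Monotone An := by
    intro i j hij z hz
    simp only [hAndef, Set.mem_setOf_eq] at hz ⊢
    have hcast : (i : ℝ) + 1 ≤ (j : ℝ) + 1 := by
      have := (Nat.cast_le (α := ℝ)).2 hij; linarith
    have : 1/((j : ℝ)+1) ≤ 1/((i : ℝ)+1) :=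
      one_div_le_one_div_of_le (by positivity) hcast
    linarith
  have hsup : η {z : X | dist x z < dist y z} = ⨆ n, η (An n) := by
    rw [hU]
    exact (hmono.directed_le).measure_iUnion
  have hlt : ENNReal.ofReal α < η {z : X | dist x z < dist y z} :=
    (ENNReal.ofReal_lt_iff_lt_toReal hα.1 (measure_ne_top _ _)).2 h
  rw [hsup] at hlt
  obtain ⟨n, hn⟩ := lt_iSup_iff.1 hlt
  have hn' : α < (η (An n)).toReal :=
    (ENNReal.ofReal_lt_iff_lt_toReal hα.1 (measure_ne_top _ _)).1 hn
  have hεpos : (0:ℝ) < 1/((n : ℝ)+1) := by positivity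
  have hδ : 0 < (1/((n : ℝ)+1)) * ((η (An n)).toReal - α) :=
    mul_pos hεpos (by linarith)
  have hlb : ∫ z, minCost p x y z ∂η + (1/((n : ℝ)+1)) * ((η (An n)).toReal - α)
      ≤ sInf (cSet p η x y α) := by
    refine le_csInf (cSet_nonempty hp hxy hη hmom hα) ?_
    rintro r ⟨π, hπ, h1, h2, rfl⟩
    exact coupling_cost_ge_eps hp hxy hη hmom hα hεpos hπ h1 h2
  linarith

include hp hxy hη hmom in
lemma lt_sInf_cSet_of_gt {α : ℝ} (hα : α ∈ Icc (0:ℝ) 1)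
    (h : (η {z | dist x z ≤ dist y z}).toReal < α) :
    ∫ z, minCost p x y z ∂η < sInf (cSet p η x y α) := by
  haveI := hη
  have hswap : cSet p η x y α = cSet p η y x (1 - α) := by
    unfold cSet
    rw [twoPoint_comm]
  have hmineq : ∫ z, minCost p x y z ∂η = ∫ z, minCost p y x z ∂η := by
    refine integral_congr_ae (Filter.Eventually.of_forall fun z => ?_)
    show min _ _ = min _ _
    rw [min_comm]
  have hcomplset : {z : X | dist y z < dist x z} = {z : X | dist x z ≤ dist y z}ᶜ := by
    ext z
    simp [not_le]
  have hmeas1 : (η {z : X | dist x z ≤ dist y z}) ≤ 1 := prob_le_one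
  have hmeasc : (η {z : X | dist y z < dist x z}).toReal
      = 1 - (η {z : X | dist x z ≤ dist y z}).toReal := by
    rw [hcomplset, measure_compl (measurableSet_leSet x y) (measure_ne_top _ _), measure_univ,
      ENNReal.toReal_sub_of_le hmeas1 ENNReal.one_ne_top, ENNReal.toReal_one]
  rw [hswap, hmineq]
  refine lt_sInf_cSet_of_lt hp hxy.symm hη hmom
    ⟨by linarith [hα.2], by linarith [hα.1]⟩ ?_
  rw [hmeasc]
  linarith

end Main

end WTP

end Aux

/-- `α δ_x + (1-α) δ_y` minimizes the `p`-Wasserstein distance from `η` among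
measures of the form `a δ_x + (1-a) δ_y`, `a ∈ [0,1]`, if and only if
`η({z : r(x,z) < r(y,z)}) ≤ α ≤ η({z : r(x,z) ≤ r(y,z)})`. -/
theorem wasserstein_two_point_projection {X : Type*} [MetricSpace X] [CompleteSpace X]
    [TopologicalSpace.SeparableSpace X] [MeasurableSpace X] [BorelSpace X]
    {p : ℝ} (hp : 1 ≤ p) {x y : X} (hxy : x ≠ y)
    (η : Measure X) (hη : IsProbabilityMeasure η)
    (hmom : ∀ x0 : X, HasFiniteIntegral (fun z => dist z x0 ^ p) η)
    {α : ℝ} (hα : α ∈ Set.Icc (0 : ℝ) 1) :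
    wassersteinDist dist p η (twoPointMeasure x y α) =
        sInf {d : ℝ | ∃ a ∈ Set.Icc (0 : ℝ) 1,
          d = wassersteinDist dist p η (twoPointMeasure x y a)} ↔
      (η {z | dist x z < dist y z}).toReal ≤ α ∧
        α ≤ (η {z | dist x z ≤ dist y z}).toReal := by
  haveI := hη
  haveI : SecondCountableTopology X := UniformSpace.secondCountable_of_separable X
  set L := ∫ z, WTP.minCost p x y z ∂η with hLdef
  have hL0 : 0 ≤ L :=
    integral_nonneg fun z => le_min (Real.rpow_nonneg dist_nonneg p)
      (Real.rpow_nonneg dist_nonneg p)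
  have hp0 : 0 < 1 / p := by positivity
  set m := (η {z : X | dist x z < dist y z}).toReal with hmdef
  set M := (η {z : X | dist x z ≤ dist y z}).toReal with hMdef
  have hmM : m ≤ M := by
    rw [hmdef, hMdef]
    refine ENNReal.toReal_mono (measure_ne_top _ _) (measure_mono ?_)
    intro z hz
    have hz' : dist x z < dist y z := hz
    show dist x z ≤ dist y z
    exact le_of_lt hz'
  have hm0 : 0 ≤ m := ENNReal.toReal_nonneg
  have hM1 : M ≤ 1 := by
    rw [hMdef, ← ENNReal.toReal_one]
    exact ENNReal.toReal_mono ENNReal.one_ne_top prob_le_one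
  have hmIcc : m ∈ Set.Icc (0:ℝ) 1 := ⟨hm0, hmM.trans hM1⟩
  set D := {d : ℝ | ∃ a ∈ Set.Icc (0 : ℝ) 1,
    d = wassersteinDist dist p η (twoPointMeasure x y a)} with hDdef
  have hWm : wassersteinDist dist p η (twoPointMeasure x y m) = L ^ (1/p) := by
    rw [WTP.wassersteinDist_eq, WTP.sInf_cSet_eq_of_mem hp hxy hη hmom hmIcc le_rfl hmM]
  have hmemD : L ^ (1/p) ∈ D := ⟨m, hmIcc, hWm.symm⟩
  have hlb : ∀ d ∈ D, L ^ (1/p) ≤ d := by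
    rintro d ⟨a, ha, rfl⟩
    rw [WTP.wassersteinDist_eq]
    exact Real.rpow_le_rpow hL0 (WTP.le_sInf_cSet hp hxy hη hmom ha) (le_of_lt hp0)
  have hsInfD : sInf D = L ^ (1/p) :=
    le_antisymm (csInf_le ⟨L ^ (1/p), hlb⟩ hmemD) (le_csInf ⟨_, hmemD⟩ hlb)
  rw [hsInfD]
  constructor
  · intro hEq
    by_contra hc
    rw [not_and_or] at hc
    have hgt : L < sInf (WTP.cSet p η x y α) := by
      rcases hc with hc | hc
      · exact WTP.lt_sInf_cSet_of_lt hp hxy hη hmom hα (not_le.1 hc)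
      · exact WTP.lt_sInf_cSet_of_gt hp hxy hη hmom hα (not_le.1 hc)
    have : L ^ (1/p) < sInf (WTP.cSet p η x y α) ^ (1/p) :=
      Real.rpow_lt_rpow hL0 hgt hp0
    rw [WTP.wassersteinDist_eq] at hEq
    rw [hEq] at this
    exact lt_irrefl _ this
  · rintro ⟨h1, h2⟩
    rw [WTP.wassersteinDist_eq, WTP.sInf_cSet_eq_of_mem hp hxy hη hmom hα h1 h2]
end

section
/- Let Φ be an isometry of W_2(T^n) (n ≥ 2) fixing all Dirac measures. Then Φ preserves all hyperplane masses: Φ(μ)(H(z,j)) = μ(H(z,j)) for every μ ∈ W_2(T^n), every z ∈ T^n and j ∈ {1,...,n}, where H(z,j) = {y ∈ T^n : y_j = z_j}. Consequently, Φ preserves the one-dimensional marginals: (p_j)_# Φ(μ) = (p_j)_# μ for the coordinate projection p_j : T^n → T. -/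
open MeasureTheory Filter

/-- The flat `n`-dimensional torus `ℝ^n/ℤ^n`. -/
abbrev Torus (n : ℕ) := Fin n → AddCircle (1 : ℝ)

/-- The flat (ℓ²) metric on the torus: each coordinate distance is the
distance `|(x_k - y_k) mod 1|` on `ℝ/ℤ`. -/
noncomputable def torusDist {n : ℕ} (x y : Torus n) : ℝ :=
  Real.sqrt (∑ k, dist (x k) (y k) ^ 2)

noncomputable section

local notation "𝕊" => AddCircle (1:ℝ)

instance factpos : Fact ((0:ℝ) < 1) := ⟨one_pos⟩

lemma normval (y : ℝ) (k : ℤ) (h1 : (k:ℝ) - 2⁻¹ ≤ y) (h2 : y < k + 2⁻¹) :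
    ‖(↑y : 𝕊)‖ = |y - k| := by
  have hround : round y = k := by
    rw [round_eq, Int.floor_eq_iff]; constructor <;> push_cast <;> linarith
  rw [AddCircle.norm_eq]; simp [hround]

lemma exists_rep (u : 𝕊) : ∃ x : ℝ, -(2⁻¹:ℝ) ≤ x ∧ x < 2⁻¹ ∧ u = ↑x := by
  obtain ⟨y, rfl⟩ := QuotientAddGroup.mk_surjective u
  refine ⟨y - round y, ?_, ?_, ?_⟩
  · rw [round_eq]; push_cast; linarith [Int.floor_le (y + 2⁻¹)]
  · rw [round_eq]; push_cast; linarith [Int.lt_floor_add_one (y + 2⁻¹)]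
  · show _ = ((↑(y - round y) : 𝕊))
    rw [show ((↑(y - round y) : 𝕊)) = ↑y - ↑(round y : ℝ) from rfl]
    have : ((↑(round y : ℝ)) : 𝕊) = 0 := by
      rw [QuotientAddGroup.eq_zero_iff]
      exact AddSubgroup.intCast_mem_zmultiples_one _
    rw [this, sub_zero]

lemma tent_id (u : 𝕊) {ε : ℝ} (hε0 : 0 ≤ ε) (hε : ε ≤ 4⁻¹) :
    ‖u - ↑ε‖^2 + ‖u + ↑ε‖^2 - 2*‖u‖^2 = 2*ε^2 - 2 * max (ε - ‖u + ↑(2⁻¹:ℝ)‖) 0 := by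
  obtain ⟨x, hx1, hx2, rfl⟩ := exists_rep u
  have e1 : (↑x - ↑ε : 𝕊) = ↑(x - ε) := rfl
  have e2 : (↑x + ↑ε : 𝕊) = ↑(x + ε) := rfl
  have e3 : (↑x + ↑(2⁻¹:ℝ) : 𝕊) = ↑(x + 2⁻¹) := rfl
  rw [e1, e2, e3, normval x 0 (by push_cast; linarith) (by push_cast; linarith)]
  rcases le_or_gt (2⁻¹:ℝ) (x + ε) with hB | hB
  · -- B : x + ε ≥ 1/2
    rw [normval (x+ε) 1 (by push_cast; linarith) (by push_cast; linarith),
        normval (x-ε) 0 (by push_cast; linarith) (by push_cast; linarith),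
        normval (x+2⁻¹) 1 (by push_cast; linarith) (by push_cast; linarith)]
    rw [max_eq_left (by rw [abs_of_nonpos (by push_cast; linarith)]; push_cast; linarith)]
    rw [sq_abs, sq_abs, sq_abs, abs_of_nonpos (by push_cast; linarith)]
    push_cast; ring
  · rcases lt_or_ge (x - ε) (-(2⁻¹:ℝ)) with hC | hC
    · -- C : x - ε < -1/2
      rw [normval (x+ε) 0 (by push_cast; linarith) (by push_cast; linarith),
          normval (x-ε) (-1) (by push_cast; linarith) (by push_cast; linarith),
          normval (x+2⁻¹) 0 (by push_cast; linarith) (by push_cast; linarith)]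
      rw [max_eq_left (by rw [abs_of_nonneg (by push_cast; linarith)]; push_cast; linarith)]
      rw [sq_abs, sq_abs, sq_abs, abs_of_nonneg (by push_cast; linarith)]
      push_cast; ring
    · -- A : interior
      rw [normval (x+ε) 0 (by push_cast; linarith) (by push_cast; linarith),
          normval (x-ε) 0 (by push_cast; linarith) (by push_cast; linarith)]
      rcases le_or_gt 0 x with hx0 | hx0
      · rw [normval (x+2⁻¹) 1 (by push_cast; linarith) (by push_cast; linarith)]
        rw [max_eq_right (by rw [abs_of_nonpos (by push_cast; linarith)]; push_cast; linarith)]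
        rw [sq_abs, sq_abs, sq_abs]; push_cast; ring
      · rw [normval (x+2⁻¹) 0 (by push_cast; linarith) (by push_cast; linarith)]
        rw [max_eq_right (by rw [abs_of_nonneg (by push_cast; linarith)]; push_cast; linarith)]
        rw [sq_abs, sq_abs, sq_abs]; push_cast; ring

lemma half_half : ((↑(2⁻¹:ℝ) : 𝕊)) + ↑(2⁻¹:ℝ) = 0 := by
  rw [show ((↑(2⁻¹:ℝ):𝕊) + ↑(2⁻¹:ℝ)) = ↑((2⁻¹:ℝ) + 2⁻¹) from rfl]
  norm_num

lemma tent_id' (s t : 𝕊) {ε : ℝ} (hε0 : 0 ≤ ε) (hε : ε ≤ 4⁻¹) :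
    dist s (t + ↑ε)^2 + dist s (t - ↑ε)^2 - 2*dist s t^2
      = 2*ε^2 - 2 * max (ε - dist s (t + ↑(2⁻¹:ℝ))) 0 := by
  have h1 : dist s (t + ↑ε) = ‖(s - t) - ↑ε‖ := by rw [dist_eq_norm]; congr 1; abel
  have h2 : dist s (t - ↑ε) = ‖(s - t) + ↑ε‖ := by rw [dist_eq_norm]; congr 1; abel
  have h3 : dist s t = ‖s - t‖ := dist_eq_norm s t
  have h4 : dist s (t + ↑(2⁻¹:ℝ)) = ‖(s - t) + ↑(2⁻¹:ℝ)‖ := by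
    rw [dist_eq_norm]
    have : s - (t + ↑(2⁻¹:ℝ)) = (s - t) + ↑(2⁻¹:ℝ) + -(↑(2⁻¹:ℝ) + ↑(2⁻¹:ℝ)) := by abel
    rw [this, half_half, neg_zero, add_zero]
  rw [h1, h2, h3, h4]
  exact tent_id (s - t) hε0 hε

lemma integrable_of_cont {X : Type*} [MeasurableSpace X] [TopologicalSpace X] [CompactSpace X]
    [OpensMeasurableSpace X] [SecondCountableTopology X] (μ : Measure X) [IsFiniteMeasure μ]
    {f : X → ℝ} (hf : Continuous f) : Integrable f μ :=
  hf.integrable_of_hasCompactSupport (HasCompactSupport.of_compactSpace f)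

lemma tents_eq (ν ν' : Measure 𝕊) [IsProbabilityMeasure ν] [IsProbabilityMeasure ν']
    (hG : ∀ t : 𝕊, ∫ s, dist s t^2 ∂ν = ∫ s, dist s t^2 ∂ν')
    {ε : ℝ} (hε0 : 0 ≤ ε) (hε : ε ≤ 4⁻¹) (a : 𝕊) :
    ∫ s, max (ε - dist s a) 0 ∂ν = ∫ s, max (ε - dist s a) 0 ∂ν' := by
  set t := a - ↑(2⁻¹:ℝ) with ht
  have hta : t + ↑(2⁻¹:ℝ) = a := by rw [ht]; abel
  have expand : ∀ (ρ : Measure 𝕊), IsProbabilityMeasure ρ →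
      (∫ s, dist s (t + ↑ε)^2 ∂ρ) + (∫ s, dist s (t - ↑ε)^2 ∂ρ) - 2*(∫ s, dist s t^2 ∂ρ)
        = 2*ε^2 - 2*(∫ s, max (ε - dist s a) 0 ∂ρ) := by
    intro ρ hρ
    have i1 : Integrable (fun s : 𝕊 => dist s (t + ↑ε)^2) ρ :=
      integrable_of_cont ρ (by fun_prop)
    have i2 : Integrable (fun s : 𝕊 => dist s (t - ↑ε)^2) ρ :=
      integrable_of_cont ρ (by fun_prop)
    have i3 : Integrable (fun s : 𝕊 => dist s t^2) ρ :=
      integrable_of_cont ρ (by fun_prop)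
    have i4 : Integrable (fun s : 𝕊 => max (ε - dist s a) 0) ρ :=
      integrable_of_cont ρ (by fun_prop)
    have i12 : Integrable (fun s : 𝕊 => dist s (t + ↑ε)^2 + dist s (t - ↑ε)^2) ρ := i1.add i2
    have lhs : ∫ s, (dist s (t + ↑ε)^2 + dist s (t - ↑ε)^2 - 2*dist s t^2) ∂ρ
        = (∫ s, dist s (t + ↑ε)^2 ∂ρ) + (∫ s, dist s (t - ↑ε)^2 ∂ρ) - 2*(∫ s, dist s t^2 ∂ρ) := by
      rw [integral_sub i12 (i3.const_mul 2), integral_add i1 i2, integral_const_mul]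
    rw [← lhs]
    have : ∀ s : 𝕊, dist s (t + ↑ε)^2 + dist s (t - ↑ε)^2 - 2*dist s t^2
        = 2*ε^2 - 2 * max (ε - dist s a) 0 := by
      intro s; rw [← hta]; exact tent_id' s t hε0 hε
    rw [integral_congr_ae (Filter.Eventually.of_forall this),
        integral_sub (integrable_const _) (i4.const_mul 2), integral_const, integral_const_mul]
    simp
  have E1 := expand ν inferInstance
  have E2 := expand ν' inferInstance
  rw [hG (t + ↑ε), hG (t - ↑ε), hG t] at E1
  rw [E2] at E1
  linarith

lemma abs_int_le {X : Type*} [MeasurableSpace X] (μ : Measure X) (f : X → ℝ) :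
    |∫ x, f x ∂μ| ≤ ∫ x, |f x| ∂μ := by
  simpa [Real.norm_eq_abs] using norm_integral_le_integral_norm (μ:=μ) f

lemma integral_cont_eq (ν ν' : Measure 𝕊) [IsProbabilityMeasure ν] [IsProbabilityMeasure ν']
    (hT : ∀ ε : ℝ, 0 < ε → ε ≤ 4⁻¹ → ∀ a : 𝕊,
      ∫ s, max (ε - dist s a) 0 ∂ν = ∫ s, max (ε - dist s a) 0 ∂ν')
    {h : 𝕊 → ℝ} (hh : Continuous h) : ∫ s, h s ∂ν = ∫ s, h s ∂ν' := by
  suffices H : ∀ δ : ℝ, 0 < δ → |(∫ s, h s ∂ν) - ∫ s, h s ∂ν'| ≤ 2*δ by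
    by_contra hne
    have hD : 0 < |(∫ s, h s ∂ν) - ∫ s, h s ∂ν'| := abs_pos.mpr (sub_ne_zero.mpr hne)
    have := H (|(∫ s, h s ∂ν) - ∫ s, h s ∂ν'|/8) (by linarith)
    linarith
  intro δ hδ
  obtain ⟨ε₀, hε₀, hmod⟩ := Metric.uniformContinuous_iff.mp
    (CompactSpace.uniformContinuous_of_continuous hh) δ hδ
  set ε : ℝ := min (ε₀/2) 4⁻¹ with hεdef
  have hε0 : 0 < ε := lt_min (by linarith) (by norm_num)
  have hε4 : ε ≤ 4⁻¹ := min_le_right _ _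
  have hmod' : ∀ a s : 𝕊, dist s a ≤ ε → |h s - h a| ≤ δ := by
    intro a s hd
    have : dist s a < ε₀ := lt_of_le_of_lt hd (lt_of_le_of_lt (min_le_left _ _) (by linarith))
    have := hmod this
    rw [Real.dist_eq] at this
    exact this.le
  set T : 𝕊 → 𝕊 → ℝ := fun a s => max (ε - dist s a) 0 with hT_def
  have Tnn : ∀ a s, 0 ≤ T a s := fun a s => le_max_right _ _
  have Tcont : Continuous fun p : 𝕊 × 𝕊 => T p.1 p.2 := by fun_prop
  set c : ℝ := ∫ u : 𝕊, max (ε - ‖u‖) 0 with hc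
  have hTc : ∀ s : 𝕊, ∫ a, T a s ∂volume = c := by
    intro s
    have e : (fun a => T a s) = fun a => (fun u : 𝕊 => max (ε - ‖u‖) 0) (s - a) := by
      funext a; simp [hT_def, dist_eq_norm]
    rw [e, integral_sub_left_eq_self (fun u : 𝕊 => max (ε - ‖u‖) 0) volume s]
  have hnn : (0 : 𝕊 → ℝ) ≤ fun u : 𝕊 => max (ε - ‖u‖) 0 := fun u => le_max_right _ _
  have hint0 : Integrable (fun u : 𝕊 => max (ε - ‖u‖) 0) volume :=
    integrable_of_cont volume (by fun_prop)
  have hcpos : 0 < c := by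
    rw [hc, integral_pos_iff_support_of_nonneg hnn hint0]
    refine lt_of_lt_of_le (Metric.measure_ball_pos volume (0:𝕊) hε0) (measure_mono ?_)
    intro u hu
    rw [Metric.mem_ball, dist_zero_right] at hu
    simp only [Function.mem_support]
    have : 0 < max (ε - ‖u‖) 0 := lt_max_of_lt_left (by linarith)
    exact ne_of_gt this
  -- Fubini
  have swap : ∀ (ρ : Measure 𝕊), IsProbabilityMeasure ρ →
      ∫ s, (∫ a, h a * T a s ∂volume) ∂ρ = ∫ a, h a * (∫ s, T a s ∂ρ) ∂volume := by
    intro ρ hρ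
    have hint : Integrable (Function.uncurry fun s a => h a * T a s) (ρ.prod volume) := by
      apply integrable_of_cont
      have : Continuous fun p : 𝕊 × 𝕊 => h p.2 * T p.2 p.1 := by fun_prop
      exact this
    rw [integral_integral_swap hint]
    congr 1
    funext a
    rw [integral_const_mul]
  set K : 𝕊 → ℝ := fun s => ∫ a, h a * T a s ∂volume with hK
  have hKint : ∀ (ρ : Measure 𝕊), IsProbabilityMeasure ρ → Integrable K ρ := by
    intro ρ hρ
    have hint : Integrable (fun p : 𝕊 × 𝕊 => h p.2 * T p.2 p.1) (ρ.prod volume) := by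
      apply integrable_of_cont; fun_prop
    exact hint.integral_prod_left
  have hKν : ∫ s, K s ∂ν = ∫ s, K s ∂ν' := by
    rw [hK]
    rw [swap ν inferInstance, swap ν' inferInstance]
    congr 1
    funext a
    rw [hT ε hε0 hε4 a]
  -- pointwise bound
  have hpt : ∀ s : 𝕊, |c * h s - K s| ≤ δ * c := by
    intro s
    have ich : Integrable (fun a : 𝕊 => h s * T a s) volume := integrable_of_cont volume (by fun_prop)
    have ich2 : Integrable (fun a : 𝕊 => h a * T a s) volume := integrable_of_cont volume (by fun_prop)
    have e1 : c * h s = ∫ a, h s * T a s ∂volume := by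
      rw [integral_const_mul, hTc s, mul_comm]
    have e2 : c * h s - K s = ∫ a, (h s - h a) * T a s ∂volume := by
      rw [e1, hK, ← integral_sub ich ich2]
      congr 1; funext a; ring
    rw [e2]
    have hb : ∀ a : 𝕊, |(h s - h a) * T a s| ≤ δ * T a s := by
      intro a
      rcases le_or_gt (dist s a) ε with hd | hd
      · rw [abs_mul, abs_of_nonneg (Tnn a s)]
        exact mul_le_mul_of_nonneg_right (hmod' a s hd) (Tnn a s)
      · have : T a s = 0 := max_eq_right (by linarith)
        rw [this, mul_zero, abs_zero, mul_zero]
    calc |∫ a, (h s - h a) * T a s ∂volume| ≤ ∫ a, |(h s - h a) * T a s| ∂volume :=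
            abs_int_le _ _
      _ ≤ ∫ a, δ * T a s ∂volume :=
            integral_mono (integrable_of_cont volume (by fun_prop))
              (integrable_of_cont volume (by fun_prop)) hb
      _ = δ * c := by rw [integral_const_mul, hTc s]
  -- assemble
  have key : ∀ (ρ : Measure 𝕊), IsProbabilityMeasure ρ →
      |c * (∫ s, h s ∂ρ) - ∫ s, K s ∂ρ| ≤ δ * c := by
    intro ρ hρ
    have ih : Integrable h ρ := integrable_of_cont ρ hh
    have e : c * (∫ s, h s ∂ρ) - ∫ s, K s ∂ρ = ∫ s, (c * h s - K s) ∂ρ := by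
      rw [integral_sub (ih.const_mul c) (hKint ρ hρ), integral_const_mul]
    rw [e]
    calc |∫ s, (c * h s - K s) ∂ρ| ≤ ∫ s, |c * h s - K s| ∂ρ := abs_int_le _ _
      _ ≤ ∫ s, δ * c ∂ρ := integral_mono ((ih.const_mul c).sub (hKint ρ hρ)).abs
            (integrable_const _) hpt
      _ = δ * c := by simp
  have k1 := key ν inferInstance
  have k2 := key ν' inferInstance
  rw [hKν] at k1
  have : |c * (∫ s, h s ∂ν) - c * (∫ s, h s ∂ν')| ≤ 2 * δ * c := by
    calc |c * (∫ s, h s ∂ν) - c * (∫ s, h s ∂ν')|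
        ≤ |c * (∫ s, h s ∂ν) - ∫ s, K s ∂ν'| + |c * (∫ s, h s ∂ν') - ∫ s, K s ∂ν'| := by
          have h1 := abs_sub_le (c * (∫ s, h s ∂ν)) (∫ s, K s ∂ν') (c * (∫ s, h s ∂ν'))
          rw [abs_sub_comm (∫ s, K s ∂ν') (c * (∫ s, h s ∂ν'))] at h1
          exact h1
      _ ≤ 2 * δ * c := by linarith
  rw [← mul_sub, abs_mul, abs_of_pos hcpos] at this
  have := (mul_le_mul_iff_right₀ hcpos).mp (by linarith : c * |(∫ s, h s ∂ν) - ∫ s, h s ∂ν'| ≤ c * (2*δ))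
  linarith

lemma circle_ext (ν ν' : Measure 𝕊) [IsProbabilityMeasure ν] [IsProbabilityMeasure ν']
    (hG : ∀ t : 𝕊, ∫ s, dist s t^2 ∂ν = ∫ s, dist s t^2 ∂ν') : ν = ν' := by
  have hcont : ∀ {h : 𝕊 → ℝ}, Continuous h → ∫ s, h s ∂ν = ∫ s, h s ∂ν' := by
    intro h hh
    exact integral_cont_eq ν ν' (fun ε hε0 hε4 a => tents_eq ν ν' hG hε0.le hε4 a) hh
  apply ext_of_forall_lintegral_eq_of_IsFiniteMeasure
  intro f
  have hfc : Continuous fun x : 𝕊 => ((f x : NNReal) : ℝ) :=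
    NNReal.continuous_coe.comp f.continuous
  have hint : ∀ (ρ : Measure 𝕊), IsProbabilityMeasure ρ →
      (∫⁻ x, (f x : ENNReal) ∂ρ) = ENNReal.ofReal (∫ x, ((f x : NNReal) : ℝ) ∂ρ) := by
    intro ρ hρ
    rw [← lintegral_coe_eq_integral (fun x => f x) (integrable_of_cont ρ hfc)]
  rw [hint ν inferInstance, hint ν' inferInstance, hcont hfc]

lemma G_integrable (ν : Measure 𝕊) [IsProbabilityMeasure ν] :
    Integrable (fun t : 𝕊 => ∫ s, dist s t^2 ∂ν) volume := by
  have hint : Integrable (fun p : 𝕊 × 𝕊 => dist p.2 p.1 ^ 2) (volume.prod ν) :=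
    integrable_of_cont _ (by fun_prop)
  exact hint.integral_prod_left

lemma haar_avg (ν : Measure 𝕊) [IsProbabilityMeasure ν] :
    ∫ t : 𝕊, (∫ s, dist s t^2 ∂ν) ∂volume = ∫ t : 𝕊, ‖t‖^2 ∂volume := by
  have hint : Integrable (Function.uncurry fun t s : 𝕊 => dist s t ^ 2) (volume.prod ν) :=
    integrable_of_cont _ (by fun_prop)
  rw [integral_integral_swap hint]
  have inner : ∀ s : 𝕊, ∫ t : 𝕊, dist s t^2 ∂volume = ∫ t : 𝕊, ‖t‖^2 ∂volume := by
    intro s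
    have e : (fun t : 𝕊 => dist s t ^ 2) = fun t => (fun u : 𝕊 => ‖u‖^2) (s - t) := by
      funext t; simp [dist_eq_norm]
    rw [e, integral_sub_left_eq_self (fun u : 𝕊 => ‖u‖^2) volume s]
  rw [integral_congr_ae (Filter.Eventually.of_forall inner), integral_const]
  simp

lemma const_diff_zero (ν ν' : Measure 𝕊) [IsProbabilityMeasure ν] [IsProbabilityMeasure ν']
    (c : ℝ) (h : ∀ t : 𝕊, ∫ s, dist s t^2 ∂ν' = (∫ s, dist s t^2 ∂ν) + c) : c = 0 := by
  have h1 := haar_avg ν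
  have h2 := haar_avg ν'
  rw [integral_congr_ae (Filter.Eventually.of_forall h),
    integral_add (G_integrable ν) (integrable_const c), integral_const] at h2
  have hu : volume.real (Set.univ : Set 𝕊) = 1 := by
    rw [Measure.real, AddCircle.measure_univ]; simp
  rw [hu, h1] at h2
  simpa using h2

lemma torus_rpow {n : ℕ} (y x : Torus n) :
    torusDist y x ^ (2:ℝ) = ∑ k, dist (y k) (x k)^2 := by
  rw [torusDist, show (2:ℝ) = ((2:ℕ):ℝ) by norm_num, Real.rpow_natCast,
    Real.sq_sqrt (Finset.sum_nonneg fun k _ => sq_nonneg _)]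

lemma coupling_integral {n : ℕ} (μ : Measure (Torus n)) (x : Torus n)
    (π : Measure (Torus n × Torus n)) (hπ : IsProbabilityMeasure π)
    (h1 : π.map Prod.fst = μ) (h2 : π.map Prod.snd = Measure.dirac x) :
    ∫ q, torusDist q.1 q.2 ^ (2:ℝ) ∂π = ∫ y, ∑ k, dist (y k) (x k)^2 ∂μ := by
  have hxm : MeasurableSet ({x} : Set (Torus n)) := isClosed_singleton.measurableSet
  have hae : ∀ᵐ q ∂π, q.2 = x := by
    rw [ae_iff]
    have : {q : Torus n × Torus n | ¬q.2 = x} = Prod.snd ⁻¹' ({x}ᶜ) := rfl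
    rw [this, ← Measure.map_apply measurable_snd hxm.compl, h2,
      Measure.dirac_apply' x hxm.compl]
    simp
  have hcongr : ∫ q, torusDist q.1 q.2 ^ (2:ℝ) ∂π = ∫ q, (∑ k, dist (q.1 k) (x k)^2) ∂π := by
    apply integral_congr_ae
    filter_upwards [hae] with q hq
    rw [hq, torus_rpow]
  rw [hcongr, ← h1]
  have hcont : Continuous fun y : Torus n => ∑ k, dist (y k) (x k)^2 := by fun_prop
  rw [integral_map measurable_fst.aemeasurable hcont.aestronglyMeasurable]

lemma wdist_dirac {n : ℕ} (μ : Measure (Torus n)) [hμ : IsProbabilityMeasure μ] (x : Torus n) :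
    wassersteinDist torusDist 2 μ (Measure.dirac x)
      = (∫ y, ∑ k, dist (y k) (x k)^2 ∂μ) ^ ((1:ℝ)/2) := by
  have hset : {r : ℝ | ∃ π : Measure (Torus n × Torus n), IsProbabilityMeasure π ∧
      π.map Prod.fst = μ ∧ π.map Prod.snd = Measure.dirac x ∧
      r = ∫ q, torusDist q.1 q.2 ^ (2:ℝ) ∂π}
      = {∫ y, ∑ k, dist (y k) (x k)^2 ∂μ} := by
    ext r
    simp only [Set.mem_setOf_eq, Set.mem_singleton_iff]
    constructor
    · rintro ⟨π, hπ, h1, h2, rfl⟩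
      exact coupling_integral μ x π hπ h1 h2
    · rintro rfl
      refine ⟨μ.prod (Measure.dirac x), inferInstance, ?_, ?_, ?_⟩
      · rw [Measure.map_fst_prod]; simp
      · rw [Measure.map_snd_prod]; simp
      · exact (coupling_integral μ x _ inferInstance
          (by rw [Measure.map_fst_prod]; simp) (by rw [Measure.map_snd_prod]; simp)).symm
  rw [wassersteinDist, hset, csInf_singleton]

/-- An isometry of `W₂(𝕋ⁿ)` (`n ≥ 2`) fixing all Dirac measures preserves the
masses of the hyperplanes `H(z,j) = {y : y_j = z_j}` and hence the
one-dimensional marginals. -/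
theorem wasserstein_torus_isometry_preserves_marginals {n : ℕ} (hn : 2 ≤ n)
    (Φ : Measure (Torus n) → Measure (Torus n))
    (hbij : Set.BijOn Φ {μ : Measure (Torus n) | IsProbabilityMeasure μ}
      {μ : Measure (Torus n) | IsProbabilityMeasure μ})
    (hiso : ∀ μ ν : Measure (Torus n), IsProbabilityMeasure μ → IsProbabilityMeasure ν →
      wassersteinDist torusDist 2 (Φ μ) (Φ ν) = wassersteinDist torusDist 2 μ ν)
    (hdirac : ∀ x : Torus n, Φ (Measure.dirac x) = Measure.dirac x) :
    ∀ μ : Measure (Torus n), IsProbabilityMeasure μ →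
      ((∀ (z : Torus n) (j : Fin n),
          Φ μ {y : Torus n | y j = z j} = μ {y : Torus n | y j = z j}) ∧
        (∀ j : Fin n, (Φ μ).map (fun y : Torus n => y j) =
          μ.map (fun y : Torus n => y j))) := by
  intro μ hμ
  haveI := hμ
  haveI hΦ : IsProbabilityMeasure (Φ μ) := hbij.mapsTo hμ
  have key1 : ∀ x : Torus n,
      ∫ y, ∑ k, dist (y k) (x k)^2 ∂(Φ μ) = ∫ y, ∑ k, dist (y k) (x k)^2 ∂μ := by
    intro x
    have h := hiso μ (Measure.dirac x) hμ inferInstance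
    rw [hdirac x, wdist_dirac (Φ μ) x, wdist_dirac μ x] at h
    have ha : 0 ≤ ∫ y, ∑ k, dist (y k) (x k)^2 ∂(Φ μ) :=
      integral_nonneg fun y => Finset.sum_nonneg fun k _ => sq_nonneg _
    have hb : 0 ≤ ∫ y, ∑ k, dist (y k) (x k)^2 ∂μ :=
      integral_nonneg fun y => Finset.sum_nonneg fun k _ => sq_nonneg _
    have h2 := congrArg (fun r : ℝ => r ^ (2:ℝ)) h
    rw [← Real.rpow_mul ha, ← Real.rpow_mul hb] at h2
    norm_num at h2
    exact h2
  set B : Fin n → 𝕊 → ℝ := fun j t => ∫ y, dist (y j) t^2 ∂(Φ μ) with hB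
  set A : Fin n → 𝕊 → ℝ := fun j t => ∫ y, dist (y j) t^2 ∂μ with hA
  have hsum : ∀ x : Torus n, ∑ k, B k (x k) = ∑ k, A k (x k) := by
    intro x
    have e : ∀ (ρ : Measure (Torus n)), IsProbabilityMeasure ρ →
        ∫ y, ∑ k, dist (y k) (x k)^2 ∂ρ = ∑ k, ∫ y, dist (y k) (x k)^2 ∂ρ := fun ρ hρ =>
      integral_finset_sum _ (fun k _ => integrable_of_cont ρ (by fun_prop))
    have := key1 x
    rw [e _ hΦ, e _ hμ] at this
    exact this
  have hdiff : ∀ (j : Fin n) (t : 𝕊), B j t - A j t = B j 0 - A j 0 := by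
    intro j t
    have h1 := hsum (Function.update (0 : Torus n) j t)
    have h2 := hsum 0
    have expand : ∀ C : Fin n → 𝕊 → ℝ,
        ∑ k, C k (Function.update (0 : Torus n) j t k)
          = (∑ k, C k ((0 : Torus n) k)) + (C j t - C j 0) := by
      intro C
      have e1 : ∀ k : Fin n, C k (Function.update (0 : Torus n) j t k)
          = C k ((0 : Torus n) k) + (if k = j then C j t - C j 0 else 0) := by
        intro k
        rcases eq_or_ne k j with rfl | hk
        · simp [Function.update_self]
        · simp [Function.update_of_ne hk, hk]
      rw [Finset.sum_congr rfl (fun k _ => e1 k), Finset.sum_add_distrib,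
        Finset.sum_ite_eq' Finset.univ j]
      simp
    rw [expand B, expand A, h2] at h1
    linarith
  have hmeas : ∀ j : Fin n, Measurable (fun y : Torus n => y j) :=
    fun j => measurable_pi_apply j
  haveI hpm : ∀ j, IsProbabilityMeasure (μ.map (fun y : Torus n => y j)) :=
    fun j => Measure.isProbabilityMeasure_map (hmeas j).aemeasurable
  haveI hpm' : ∀ j, IsProbabilityMeasure ((Φ μ).map (fun y : Torus n => y j)) :=
    fun j => Measure.isProbabilityMeasure_map (hmeas j).aemeasurable
  have hmapint : ∀ (ρ : Measure (Torus n)) (j : Fin n) (t : 𝕊),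
      ∫ s, dist s t^2 ∂(ρ.map (fun y : Torus n => y j)) = ∫ y, dist (y j) t^2 ∂ρ := by
    intro ρ j t
    rw [integral_map (hmeas j).aemeasurable (Continuous.aestronglyMeasurable (by fun_prop))]
  have hGmarg : ∀ (j : Fin n) (t : 𝕊),
      ∫ s, dist s t^2 ∂((Φ μ).map (fun y : Torus n => y j))
        = ∫ s, dist s t^2 ∂(μ.map (fun y : Torus n => y j)) := by
    intro j t
    have hc : ∀ t : 𝕊, ∫ s, dist s t^2 ∂((Φ μ).map (fun y : Torus n => y j))
        = (∫ s, dist s t^2 ∂(μ.map (fun y : Torus n => y j))) + (B j 0 - A j 0) := by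
      intro t
      rw [hmapint _ j t, hmapint _ j t]
      have := hdiff j t
      have eB : B j t = ∫ y, dist (y j) t^2 ∂(Φ μ) := rfl
      have eA : A j t = ∫ y, dist (y j) t^2 ∂μ := rfl
      rw [← eB, ← eA]
      linarith
    have hz := const_diff_zero (μ.map (fun y : Torus n => y j))
      ((Φ μ).map (fun y : Torus n => y j)) (B j 0 - A j 0) hc
    rw [hc t, hz, add_zero]
  have hmarg : ∀ j : Fin n, (Φ μ).map (fun y : Torus n => y j)
      = μ.map (fun y : Torus n => y j) :=
    fun j => circle_ext _ _ (hGmarg j)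
  constructor
  · intro z j
    have hxm : MeasurableSet ({z j} : Set 𝕊) := isClosed_singleton.measurableSet
    have e : {y : Torus n | y j = z j} = (fun y : Torus n => y j) ⁻¹' {z j} := rfl
    rw [e, ← Measure.map_apply (hmeas j) hxm, ← Measure.map_apply (hmeas j) hxm, hmarg j]
  · exact hmarg

end
end
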